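/- Let m ≥ 2, let 0 < k_1 < ⋯ < k_m be integers with k_m − k_{m−1} ≥ 2, and let z_1, …, z_m ∈ ℂ be nonzero. Define t by t_0 = 1, t_{k_i} = z_i for 1 ≤ i ≤ m, and t_j = 0 for all other j ≥ 1, and assume 1 + Σ_{i=1}^{m} C(n,k_i)·z_i ≠ 0 for all n. Then the series Σ_{n≥1} ζ_n^a converges, where ζ_n^a = (1 + Σ_{i=1}^{m} C(n,k_i)·|z_i|)/|1 + Σ_{i=1}^{m} C(n,k_i)·z_i| − 1 (hence the associated ℂSG measure is of bounded variation). -/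

import Mathlib

open MeasureTheory Filter Finset

attribute [local instance] Classical.propDecidable

noncomputable section

/-- A relation on ℕ representing a naturally labelled past-finite causal set:
a strict partial order `r` with `r i j → i < j`. -/
def CausalRel (r : ℕ → ℕ → Prop) : Prop :=
  (∀ i, ¬ r i i) ∧ (∀ i j k, r i j → r j k → r i k) ∧ (∀ i j, r i j → i < j)

/-- Ω, the sample space of naturally labelled past-finite causal sets. -/
def Omega : Type := {r : ℕ → ℕ → Prop // CausalRel r}

/-- An `n`-node: a strict partial order on `Fin n` compatible with the labelling. -/
def IsNode {n : ℕ} (p : Fin n → Fin n → Prop) : Prop :=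
  (∀ i, ¬ p i i) ∧ (∀ i j k, p i j → p j k → p i k) ∧
    (∀ i j : Fin n, p i j → (i : ℕ) < (j : ℕ))

/-- The cylinder set of an `n`-node. -/
def Cyl {n : ℕ} (p : Fin n → Fin n → Prop) : Set Omega :=
  {r | ∀ i j : Fin n, r.1 i.1 j.1 ↔ p i j}

/-- The Boolean set algebra 𝔜 generated by the cylinder sets (and Ω itself) under
finite unions, intersections and complements. -/
inductive InAlg : Set Omega → Prop
  | basic {n : ℕ} (hn : 1 ≤ n) (p : Fin n → Fin n → Prop) (hp : IsNode p) : InAlg (Cyl p)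
  | univ : InAlg Set.univ
  | compl (s : Set Omega) : InAlg s → InAlg sᶜ
  | union (s t : Set Omega) : InAlg s → InAlg t → InAlg (s ∪ t)

/-- Finite additivity of a complex set function on the algebra 𝔜. -/
def FinitelyAdditive (μ : Set Omega → ℂ) : Prop :=
  ∀ s t : Set Omega, InAlg s → InAlg t → Disjoint s t → μ (s ∪ t) = μ s + μ t

/-- A finite partition of Ω into pairwise disjoint members of 𝔜. -/
def IsPartition (π : Finset (Set Omega)) : Prop :=
  (∀ s ∈ π, InAlg s) ∧ ((↑π : Set (Set Omega)).Pairwise Disjoint) ∧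
    ⋃₀ (↑π : Set (Set Omega)) = Set.univ

/-- Bounded variation: the sums Σᵢ |μ(αᵢ)| over finite partitions of Ω into members
of 𝔜 are uniformly bounded. -/
def BoundedVariation (μ : Set Omega → ℂ) : Prop :=
  ∃ M : ℝ, ∀ π : Finset (Set Omega), IsPartition π → ∑ s ∈ π, ‖(μ s)‖ ≤ M

/-- λ(a,b) = Σ_{k=b}^{a} C(a−b, k−b)·t_k. -/
def lam (t : ℕ → ℂ) (a b : ℕ) : ℂ :=
  ∑ k ∈ Finset.Icc b a, ((a - b).choose (k - b) : ℂ) * t k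

/-- The maximal elements of a finite subset `I` with respect to the relation `c`. -/
def maxIn {n : ℕ} (c : Fin n → Fin n → Prop) (I : Finset (Fin n)) : Finset (Fin n) :=
  I.filter fun i => ∀ j ∈ I, ¬ c i j

/-- The past of the element `m` in the node `p`. -/
def pastOf {n : ℕ} (p : Fin n → Fin n → Prop) (m : Fin n) : Finset (Fin n) :=
  Finset.univ.filter fun i => p i m

/-- The ℂSG amplitude of (the cylinder set of) an `n`-node:
∏_{m=1}^{n−1} λ(ϖ_m, μ_m)/λ(m,0). -/
def amp (t : ℕ → ℂ) {n : ℕ} (p : Fin n → Fin n → Prop) : ℂ :=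
  ∏ m ∈ Finset.univ.filter (fun m : Fin n => 1 ≤ (m : ℕ)),
    lam t (pastOf p m).card (maxIn p (pastOf p m)).card / lam t (m : ℕ) 0

/-- μ is the ℂSG measure associated to the coupling constants t: it is finitely
additive on 𝔜 and takes the prescribed values on cylinder sets. -/
def IsCSG (t : ℕ → ℂ) (μ : Set Omega → ℂ) : Prop :=
  FinitelyAdditive μ ∧
    ∀ (n : ℕ), 1 ≤ n → ∀ p : Fin n → Fin n → Prop, IsNode p → μ (Cyl p) = amp t p

/-- `I` is an order ideal (downward-closed set) of the relation `c`. -/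
def isIdeal {n : ℕ} (c : Fin n → Fin n → Prop) (I : Finset (Fin n)) : Prop :=
  ∀ j ∈ I, ∀ i, c i j → i ∈ I

/-- Q(c) := Σ_{I an order ideal of c} |λ(|I|, m(I))|. -/
def Qval (t : ℕ → ℂ) {n : ℕ} (c : Fin n → Fin n → Prop) : ℝ :=
  ∑ I ∈ Finset.univ.filter (fun I : Finset (Fin n) => isIdeal c I),
    ‖(lam t I.card (maxIn c I).card)‖

/-- ζ(c) := Q(c)/|λ(n,0)| − 1. -/
def zeta (t : ℕ → ℂ) {n : ℕ} (c : Fin n → Fin n → Prop) : ℝ :=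
  Qval t c / ‖(lam t n 0)‖ - 1

/-- ζ_n^a := (Σ_{k=0}^{n} C(n,k)·|t_k|)/|λ(n,0)| − 1. -/
def zetaA (t : ℕ → ℂ) (n : ℕ) : ℝ :=
  (∑ k ∈ Finset.range (n + 1), (n.choose k : ℝ) * ‖(t k)‖) /
    ‖(lam t n 0)‖ - 1

/-- ζ_n^c := (|t_0| + Σ_{ϖ=1}^{n} |λ(ϖ,1)|)/|λ(n,0)| − 1. -/
def zetaC (t : ℕ → ℂ) (n : ℕ) : ℝ :=
  (‖(t 0)‖ + ∑ w ∈ Finset.Icc 1 n, ‖(lam t w 1)‖) /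
    ‖(lam t n 0)‖ - 1

/-- S_n := Σ_{p an n-node} |μ(Cyl(p))|. -/
def Svar (μ : Set Omega → ℂ) (n : ℕ) : ℝ :=
  ∑ p : {p : Fin n → Fin n → Prop // IsNode p}, ‖(μ (Cyl p.1))‖


set_option maxHeartbeats 1000000

lemma s13_key_sum {R : Type*} [CommRing R] {m : ℕ} (k : Fin m → ℕ) (hk1 : ∀ i, 1 ≤ k i)
    (hkinj : Function.Injective k) (s : ℕ → R) (w : Fin m → R)
    (hs0 : s 0 = 1) (hsk : ∀ i, s (k i) = w i)
    (hs : ∀ j, 1 ≤ j → (∀ i, j ≠ k i) → s j = 0) (n : ℕ) :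
    ∑ j ∈ Finset.range (n + 1), (n.choose j : R) * s j
      = 1 + ∑ i, (n.choose (k i) : R) * w i := by
  have hrepr : ∀ j, s j = (if j = 0 then 1 else 0) + ∑ i, (if j = k i then w i else 0) := by
    intro j
    rcases eq_or_ne j 0 with rfl | hj
    · rw [if_pos rfl, Finset.sum_eq_zero, add_zero, hs0]
      intro i _
      rw [if_neg]
      intro h
      have := hk1 i
      omega
    · rw [if_neg hj, zero_add]
      by_cases hex : ∃ i, j = k i
      · obtain ⟨i, rfl⟩ := hex
        rw [hsk, Finset.sum_eq_single i]
        · rw [if_pos rfl]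
        · intro i' _ hne
          rw [if_neg]
          exact fun h => hne (hkinj h).symm
        · intro h; exact absurd (Finset.mem_univ i) h
      · rw [hs j (Nat.one_le_iff_ne_zero.mpr hj) (fun i h => hex ⟨i, h⟩)]
        exact (Finset.sum_eq_zero fun i _ => if_neg (fun h => hex ⟨i, h⟩)).symm
  calc ∑ j ∈ Finset.range (n+1), (n.choose j : R) * s j
      = ∑ j ∈ Finset.range (n+1), ((if j = 0 then (n.choose j : R) else 0)
          + ∑ i, (if j = k i then (n.choose j : R) * w i else 0)) := by
        refine Finset.sum_congr rfl fun j _ => ?_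
        rw [hrepr j, mul_add, Finset.mul_sum]
        congr 1
        · split <;> simp
        · exact Finset.sum_congr rfl fun i _ => by split <;> simp
    _ = 1 + ∑ i, (n.choose (k i) : R) * w i := by
        rw [Finset.sum_add_distrib, Finset.sum_ite_eq' (Finset.range (n+1)) 0
          (fun j => (n.choose j : R)), if_pos (by simp), Nat.choose_zero_right, Nat.cast_one]
        congr 1
        rw [Finset.sum_comm]
        refine Finset.sum_congr rfl fun i _ => ?_
        rw [Finset.sum_ite_eq' (Finset.range (n+1)) (k i)
          (fun j => (n.choose j : R) * w i)]
        split
        · rfl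
        · next h =>
            rw [Nat.choose_eq_zero_of_lt (by simpa [Nat.lt_succ_iff] using h)]
            simp

-- asymptotic bound lemma, pure real/complex arithmetic
lemma s13_ratio_bound {m : ℕ} (hm : 2 ≤ m) (k : Fin m → ℕ)
    (hkmono : StrictMono k)
    (hgap : k ⟨m - 2, by omega⟩ + 2 ≤ k ⟨m - 1, by omega⟩)
    (z : Fin m → ℂ) (hz : ∀ i, z i ≠ 0)
    (hne : ∀ n : ℕ, 1 + ∑ i : Fin m, (n.choose (k i) : ℂ) * z i ≠ 0) :
    ∃ (N₀ : ℕ) (C₀ : ℝ), ∀ n : ℕ, N₀ ≤ n →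
      (1 + ∑ i : Fin m, (n.choose (k i) : ℝ) * ‖(z i)‖) /
          ‖(1 + ∑ i : Fin m, (n.choose (k i) : ℂ) * z i)‖ - 1 ≤ C₀ / (n:ℝ)^2 := by
  set T : Fin m := ⟨m - 1, by omega⟩ with hT
  set T' : Fin m := ⟨m - 2, by omega⟩ with hT'
  set K := k T with hK
  set K' := k T' with hK'
  have hKK' : K' + 2 ≤ K := hgap
  have hki_le : ∀ i : Fin m, i ≠ T → k i ≤ K' := by
    intro i hi
    apply hkmono.monotone
    have : (i : ℕ) < m := i.2
    have : (i : ℕ) ≠ m - 1 := fun h => hi (Fin.ext h)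
    simp only [Fin.le_def]
    show (i : ℕ) ≤ m - 2
    omega
  -- abbreviations
  set F : ℕ → ℝ := fun n => 1 + ∑ i : Fin m, (n.choose (k i) : ℝ) * ‖(z i)‖ with hF
  set G : ℕ → ℝ := fun n => ‖(1 + ∑ i : Fin m, (n.choose (k i) : ℂ) * z i)‖ with hG
  set r : ℕ → ℝ := fun n => 1 + ∑ i ∈ Finset.univ.erase T, (n.choose (k i) : ℝ) * ‖(z i)‖ with hr
  set B : ℕ → ℝ := fun n => (n.choose K : ℝ) * ‖(z T)‖ with hB
  have hr_nonneg : ∀ n, 0 ≤ r n := by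
    intro n
    have : 0 ≤ ∑ i ∈ Finset.univ.erase T, (n.choose (k i) : ℝ) * ‖(z i)‖ :=
      Finset.sum_nonneg fun i _ => mul_nonneg (Nat.cast_nonneg _) (norm_nonneg _)
    simp only [hr]; linarith
  have hG_pos : ∀ n, 0 < G n := fun n => norm_pos_iff.mpr (hne n)
  have hFsplit : ∀ n, F n = r n + B n := by
    intro n
    simp only [hF, hr, hB]
    rw [add_assoc, ← Finset.sum_erase_add _ _ (Finset.mem_univ T)]
  have hCsplit : ∀ n : ℕ, (1 : ℂ) + ∑ i : Fin m, (n.choose (k i) : ℂ) * z i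
      = (1 + ∑ i ∈ Finset.univ.erase T, (n.choose (k i) : ℂ) * z i)
        + (n.choose K : ℂ) * z T := by
    intro n
    rw [add_assoc, ← Finset.sum_erase_add _ _ (Finset.mem_univ T)]
  have hr' : ∀ n, ‖(1 + ∑ i ∈ Finset.univ.erase T, (n.choose (k i) : ℂ) * z i)‖ ≤ r n := by
    intro n
    calc ‖(1 + ∑ i ∈ Finset.univ.erase T, (n.choose (k i) : ℂ) * z i)‖
        ≤ ‖(1:ℂ)‖ + ‖(∑ i ∈ Finset.univ.erase T, (n.choose (k i) : ℂ) * z i)‖ :=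
          norm_add_le _ _
      _ ≤ 1 + ∑ i ∈ Finset.univ.erase T, ‖((n.choose (k i) : ℂ) * z i)‖ := by
          rw [norm_one]
          exact add_le_add (le_refl 1) (norm_sum_le _ _)
      _ = r n := by
          simp only [hr]
          congr 1
          exact Finset.sum_congr rfl fun i _ => by rw [norm_mul, Complex.norm_natCast]
  -- F ≤ G + 2r
  have hF_le : ∀ n, F n ≤ G n + 2 * r n := by
    intro n
    have h1 : B n ≤ G n + r n := by
      have : ((n.choose K : ℂ) * z T)
          = (1 + ∑ i : Fin m, (n.choose (k i) : ℂ) * z i)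
            - (1 + ∑ i ∈ Finset.univ.erase T, (n.choose (k i) : ℂ) * z i) := by
        rw [hCsplit n]; ring
      have h2 : ‖((n.choose K : ℂ) * z T)‖ ≤ G n +
          ‖(1 + ∑ i ∈ Finset.univ.erase T, (n.choose (k i) : ℂ) * z i)‖ := by
        rw [this]
        exact (norm_sub_le _ _).trans (by rfl)
      have h3 : ‖((n.choose K : ℂ) * z T)‖ = B n := by
        rw [norm_mul, Complex.norm_natCast]
      linarith [hr' n]
    linarith [hFsplit n]
  -- G ≥ B - r
  have hG_ge : ∀ n, B n - r n ≤ G n := by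
    intro n
    have h3 : ‖((n.choose K : ℂ) * z T)‖ = B n := by
      rw [norm_mul, Complex.norm_natCast]
    have h2 : ‖((n.choose K : ℂ) * z T)‖ ≤ G n +
        ‖(1 + ∑ i ∈ Finset.univ.erase T, (n.choose (k i) : ℂ) * z i)‖ := by
      have : ((n.choose K : ℂ) * z T)
          = (1 + ∑ i : Fin m, (n.choose (k i) : ℂ) * z i)
            - (1 + ∑ i ∈ Finset.univ.erase T, (n.choose (k i) : ℂ) * z i) := by
        rw [hCsplit n]; ring
      rw [this]
      exact norm_sub_le _ _
    linarith [hr' n]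
  -- bounds
  set Z : ℝ := 1 + ∑ i : Fin m, ‖(z i)‖ with hZ
  have hZ_pos : 0 < Z := by
    have : 0 ≤ ∑ i : Fin m, ‖(z i)‖ :=
      Finset.sum_nonneg fun i _ => norm_nonneg _
    simp only [hZ]; linarith
  have hr_le : ∀ n : ℕ, 1 ≤ n → r n ≤ Z * (n:ℝ)^K' := by
    intro n hn
    have hn1 : (1:ℝ) ≤ (n:ℝ) := by exact_mod_cast hn
    have hpow1 : (1:ℝ) ≤ (n:ℝ)^K' := one_le_pow₀ hn1
    have hterm : ∀ i ∈ Finset.univ.erase T,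
        (n.choose (k i) : ℝ) * ‖(z i)‖ ≤ ‖(z i)‖ * (n:ℝ)^K' := by
      intro i hi
      have h1 : (n.choose (k i) : ℝ) ≤ (n:ℝ)^(k i) := by
        calc (n.choose (k i) : ℝ) ≤ ((n ^ (k i) : ℕ) : ℝ) := by
              exact_mod_cast Nat.choose_le_pow n (k i)
          _ = (n:ℝ)^(k i) := by push_cast; ring
      have h2 : (n:ℝ)^(k i) ≤ (n:ℝ)^K' :=
        pow_le_pow_right₀ hn1 (hki_le i (Finset.ne_of_mem_erase hi))
      calc (n.choose (k i) : ℝ) * ‖(z i)‖ ≤ (n:ℝ)^K' * ‖(z i)‖ :=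
            mul_le_mul_of_nonneg_right (h1.trans h2) (norm_nonneg _)
        _ = ‖(z i)‖ * (n:ℝ)^K' := by ring
    calc r n ≤ 1 + ∑ i ∈ Finset.univ.erase T, ‖(z i)‖ * (n:ℝ)^K' := by
          simp only [hr]
          exact add_le_add (le_refl 1) (Finset.sum_le_sum hterm)
      _ = 1 + (∑ i ∈ Finset.univ.erase T, ‖(z i)‖) * (n:ℝ)^K' := by
          rw [Finset.sum_mul]
      _ ≤ 1 * (n:ℝ)^K' + (∑ i : Fin m, ‖(z i)‖) * (n:ℝ)^K' := by
          have hsub : (∑ i ∈ Finset.univ.erase T, ‖(z i)‖)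
              ≤ ∑ i : Fin m, ‖(z i)‖ :=
            Finset.sum_le_sum_of_subset_of_nonneg (Finset.erase_subset _ _)
              (fun i _ _ => norm_nonneg _)
          have := mul_le_mul_of_nonneg_right hsub (le_trans zero_le_one hpow1)
          linarith
      _ = Z * (n:ℝ)^K' := by simp only [hZ]; ring
  set c2 : ℝ := ‖(z T)‖ / (2^K * K.factorial) with hc2
  have hc2_pos : 0 < c2 := by
    apply div_pos (norm_pos_iff.mpr (hz T))
    positivity
  have hB_ge : ∀ n : ℕ, 2 * K ≤ n → c2 * (n:ℝ)^K ≤ B n := by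
    intro n hn
    have h1 : ((n + 1 - K : ℕ) : ℝ)^K / (K.factorial : ℝ) ≤ (n.choose K : ℝ) :=
      Nat.pow_le_choose K n
    have h2 : (n:ℝ)/2 ≤ ((n + 1 - K : ℕ) : ℝ) := by
      have : n ≤ 2 * (n + 1 - K) := by omega
      have := (Nat.cast_le (α := ℝ)).mpr this
      push_cast at this
      linarith
    have h3 : ((n:ℝ)/2)^K ≤ ((n + 1 - K : ℕ) : ℝ)^K :=
      pow_le_pow_left₀ (by positivity) h2 K
    have h4 : ((n:ℝ)/2)^K / (K.factorial : ℝ) ≤ (n.choose K : ℝ) :=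
      le_trans (by gcongr) h1
    have h5 : c2 * (n:ℝ)^K = ((n:ℝ)/2)^K / (K.factorial : ℝ) * ‖(z T)‖ := by
      simp only [hc2]
      rw [div_pow]
      field_simp
    rw [h5]
    simp only [hB]
    exact mul_le_mul_of_nonneg_right h4 (norm_nonneg _)
  -- choose N₀, C₀
  refine ⟨max (2 * K) (max 1 (Nat.ceil (2 * Z / c2))), 4 * Z / c2, ?_⟩
  intro n hn
  have hn2K : 2 * K ≤ n := le_trans (le_max_left _ _) hn
  have hn1 : 1 ≤ n := le_trans (le_trans (le_max_left _ _) (le_max_right _ _)) hn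
  have hn1' : (1:ℝ) ≤ (n:ℝ) := by exact_mod_cast hn1
  have hn0' : (0:ℝ) ≤ (n:ℝ) := by positivity
  have hnZ : 2 * Z / c2 ≤ (n:ℝ) :=
    Nat.ceil_le.mp (le_trans (le_trans (le_max_right _ _) (le_max_right _ _)) hn)
  have hp' : (0:ℝ) ≤ (n:ℝ)^K' := pow_nonneg hn0' _
  have e1 : (n:ℝ)^K = (n:ℝ)^K' * (n:ℝ)^(K - K') := by
    rw [← pow_add]
    congr 1
    omega
  have e2 : (n:ℝ) ≤ (n:ℝ)^(K - K') := by
    calc (n:ℝ) = (n:ℝ)^1 := (pow_one _).symm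
      _ ≤ (n:ℝ)^(K - K') := pow_le_pow_right₀ hn1' (by omega)
  have e3 : 2 * Z ≤ c2 * (n:ℝ) := by
    rw [div_le_iff₀ hc2_pos] at hnZ
    linarith
  have h1 : Z * (n:ℝ)^K' ≤ c2 / 2 * (n:ℝ)^K := by
    calc Z * (n:ℝ)^K' ≤ (c2 * (n:ℝ) / 2) * (n:ℝ)^K' :=
          mul_le_mul_of_nonneg_right (by linarith) hp'
      _ = c2 / 2 * ((n:ℝ)^K' * (n:ℝ)) := by ring
      _ ≤ c2 / 2 * ((n:ℝ)^K' * (n:ℝ)^(K - K')) := by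
          have := mul_le_mul_of_nonneg_left e2 hp'
          nlinarith [hc2_pos.le]
      _ = c2 / 2 * (n:ℝ)^K := by rw [← e1]
  have hg2 : c2 / 2 * (n:ℝ)^K ≤ G n := by
    have hb := hB_ge n hn2K
    have hrr := hr_le n hn1
    have hgg := hG_ge n
    nlinarith [hb, hrr, hgg, h1]
  have hKpos : (0:ℝ) < (n:ℝ)^K := by positivity
  have hg2pos : (0:ℝ) < c2 / 2 * (n:ℝ)^K := by positivity
  have hstep1 : F n / G n - 1 = (F n - G n) / G n := by
    rw [sub_div, div_self (ne_of_gt (hG_pos n))]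
  have hstep2 : (F n - G n) / G n ≤ (2 * (Z * (n:ℝ)^K')) / (c2 / 2 * (n:ℝ)^K) := by
    apply div_le_div₀
    · have := hr_le n hn1
      have := hr_nonneg n
      linarith
    · have := hF_le n
      have := hr_le n hn1
      linarith
    · exact hg2pos
    · exact hg2
  have hstep3 : (2 * (Z * (n:ℝ)^K')) / (c2 / 2 * (n:ℝ)^K) ≤ (4 * Z / c2) / (n:ℝ)^2 := by
    rw [div_le_div_iff₀ hg2pos (by positivity)]
    have e4 : (4 * Z / c2) * (c2 / 2 * (n:ℝ)^K) = 2 * Z * (n:ℝ)^K := by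
      field_simp
      ring
    rw [e4]
    have e5 : 2 * (Z * (n:ℝ)^K') * (n:ℝ)^2 = 2 * Z * (n:ℝ)^(K' + 2) := by
      rw [pow_add]
      ring
    rw [e5]
    apply mul_le_mul_of_nonneg_left (pow_le_pow_right₀ hn1' hKK')
    linarith
  calc F n / G n - 1 = (F n - G n) / G n := hstep1
    _ ≤ (2 * (Z * (n:ℝ)^K')) / (c2 / 2 * (n:ℝ)^K) := hstep2
    _ ≤ (4 * Z / c2) / (n:ℝ)^2 := hstep3

namespace S13

/-- nodes at level n -/
abbrev Node (n : ℕ) : Type := {p : Fin n → Fin n → Prop // IsNode p}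

/-- restriction of a causal set to its first n elements -/
def Phi (n : ℕ) (r : Omega) : Node n :=
  ⟨fun i j => r.1 i.1 j.1,
    ⟨fun i h => r.2.1 i.1 h, fun _ _ _ h1 h2 => r.2.2.1 _ _ _ h1 h2,
      fun _ _ h => r.2.2.2 _ _ h⟩⟩

lemma mem_Cyl_iff {n : ℕ} (p : Node n) (r : Omega) : r ∈ Cyl p.1 ↔ Phi n r = p := by
  constructor
  · intro h
    exact Subtype.ext (funext fun i => funext fun j => propext (h i j))
  · intro h i j
    rw [show p = Phi n r from h.symm]
    exact Iff.rfl

/-- union of cylinders encoded by membership of the restriction -/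
def USet (n : ℕ) (T : Finset (Node n)) : Set Omega := {r | Phi n r ∈ T}

lemma Cyl_eq_USet {n : ℕ} (p : Node n) : Cyl p.1 = USet n {p} := by
  ext r
  simp only [mem_Cyl_iff p r, USet, Set.mem_setOf_eq, Finset.mem_singleton]

lemma Cyl_nonempty {n : ℕ} (p : Node n) : (Cyl p.1).Nonempty := by
  refine ⟨⟨fun a b => ∃ (ha : a < n) (hb : b < n), p.1 ⟨a, ha⟩ ⟨b, hb⟩, ?_, ?_, ?_⟩, ?_⟩
  · rintro i ⟨ha, hb, h⟩
    exact p.2.1 _ h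
  · rintro a b c ⟨ha, hb, h1⟩ ⟨hb', hc, h2⟩
    exact ⟨ha, hc, p.2.2.1 _ _ _ h1 h2⟩
  · rintro a b ⟨ha, hb, h⟩
    exact p.2.2.2 _ _ h
  · intro i j
    constructor
    · rintro ⟨hi, hj, h⟩
      convert h <;> exact (Fin.eta _ _).symm
    · intro h
      exact ⟨i.2, j.2, by convert h <;> exact Fin.eta _ _⟩

/-- restriction of nodes -/
def resN {n N : ℕ} (h : n ≤ N) (q : Node N) : Node n :=
  ⟨fun i j => q.1 (Fin.castLE h i) (Fin.castLE h j),
    ⟨fun i hh => q.2.1 _ hh, fun _ _ _ h1 h2 => q.2.2.1 _ _ _ h1 h2,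
      fun i j hh => q.2.2.2 _ _ hh⟩⟩

lemma Phi_res {n N : ℕ} (h : n ≤ N) (r : Omega) : resN h (Phi N r) = Phi n r := rfl

lemma USet_mono {n N : ℕ} (h : n ≤ N) (T : Finset (Node n)) :
    USet n T = USet N (Finset.univ.filter (fun q => resN h q ∈ T)) := by
  ext r
  simp only [USet, Set.mem_setOf_eq, Finset.mem_filter, Finset.mem_univ, true_and, Phi_res]

lemma exists_rep {s : Set Omega} (hs : InAlg s) :
    ∃ N : ℕ, 1 ≤ N ∧ ∃ T : Finset (Node N), s = USet N T := by
  induction hs with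
  | @basic n hn p hp =>
      exact ⟨n, hn, {⟨p, hp⟩}, Cyl_eq_USet ⟨p, hp⟩⟩
  | univ =>
      exact ⟨1, le_refl 1, Finset.univ, by ext r; simp [USet]⟩
  | compl s _ ih =>
      obtain ⟨N, hN, T, rfl⟩ := ih
      exact ⟨N, hN, Tᶜ, by ext r; simp [USet]⟩
  | union s u _ _ ihs ihu =>
      obtain ⟨N₁, hN₁, T₁, rfl⟩ := ihs
      obtain ⟨N₂, hN₂, T₂, rfl⟩ := ihu
      refine ⟨max N₁ N₂, le_trans hN₁ (le_max_left _ _),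
        Finset.univ.filter (fun q => resN (le_max_left N₁ N₂) q ∈ T₁) ∪
        Finset.univ.filter (fun q => resN (le_max_right N₁ N₂) q ∈ T₂), ?_⟩
      rw [USet_mono (le_max_left N₁ N₂) T₁, USet_mono (le_max_right N₁ N₂) T₂]
      ext r
      simp [USet]

lemma exists_rep_at {s : Set Omega} (hs : InAlg s) {N : ℕ}
    (hN : (exists_rep hs).choose ≤ N) : ∃ T : Finset (Node N), s = USet N T := by
  obtain ⟨hN1, T, hT⟩ := (exists_rep hs).choose_spec
  exact ⟨_, hT.trans (USet_mono hN T)⟩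

lemma inAlg_empty : InAlg (∅ : Set Omega) := by
  have := InAlg.compl _ InAlg.univ
  simpa using this

lemma inAlg_USet {n : ℕ} (hn : 1 ≤ n) (T : Finset (Node n)) : InAlg (USet n T) := by
  induction T using Finset.induction with
  | empty => simpa [show USet n ∅ = (∅ : Set Omega) by ext r; simp [USet]] using inAlg_empty
  | @insert p T hp ih =>
      have : USet n (insert p T) = Cyl p.1 ∪ USet n T := by
        ext r
        simp only [USet, Set.mem_setOf_eq, Finset.mem_insert, Set.mem_union, mem_Cyl_iff]
      rw [this]
      exact InAlg.union _ _ (InAlg.basic hn p.1 p.2) ih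

variable {t : ℕ → ℂ} {μ : Set Omega → ℂ}

lemma mu_empty (hμ : IsCSG t μ) : μ ∅ = 0 := by
  have h := hμ.1 ∅ ∅ inAlg_empty inAlg_empty (disjoint_bot_left)
  simp only [Set.union_empty] at h
  linear_combination -h

lemma mu_USet (hμ : IsCSG t μ) {n : ℕ} (hn : 1 ≤ n) (T : Finset (Node n)) :
    μ (USet n T) = ∑ p ∈ T, amp t p.1 := by
  induction T using Finset.induction with
  | empty =>
      rw [show USet n ∅ = (∅ : Set Omega) by ext r; simp [USet], Finset.sum_empty,
        mu_empty hμ]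
  | @insert p T hp ih =>
      have hsplit : USet n (insert p T) = Cyl p.1 ∪ USet n T := by
        ext r
        simp only [USet, Set.mem_setOf_eq, Finset.mem_insert, Set.mem_union, mem_Cyl_iff]
      have hdisj : Disjoint (Cyl p.1) (USet n T) := by
        rw [Set.disjoint_left]
        intro r hr hr'
        rw [mem_Cyl_iff] at hr
        have hmem : Phi n r ∈ T := hr'
        rw [hr] at hmem
        exact hp hmem
      rw [hsplit, hμ.1 _ _ (InAlg.basic hn p.1 p.2) (inAlg_USet hn T) hdisj,
        Finset.sum_insert hp, ih, hμ.2 n hn p.1 p.2]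

/-- total variation over level-n cylinders -/
def Anorm (t : ℕ → ℂ) (n : ℕ) : ℝ := ∑ p : Node n, ‖(amp t p.1)‖

lemma partition_bound (hμ : IsCSG t μ) (π : Finset (Set Omega)) (hπ : IsPartition π) :
    ∃ n : ℕ, 1 ≤ n ∧ ∑ s ∈ π, ‖(μ s)‖ ≤ Anorm t n := by
  classical
  set n : ℕ := max 1 (π.sup (fun s => if h : InAlg s then (exists_rep h).choose else 1)) with hn
  have hn1 : 1 ≤ n := le_max_left _ _
  have hrep : ∀ s ∈ π, ∃ T : Finset (Node n), s = USet n T := by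
    intro s hs
    have hAlg : InAlg s := hπ.1 s hs
    refine exists_rep_at hAlg ?_
    calc (exists_rep hAlg).choose
        = (if h : InAlg s then (exists_rep h).choose else 1) := by rw [dif_pos hAlg]
      _ ≤ π.sup (fun s => if h : InAlg s then (exists_rep h).choose else 1) :=
          Finset.le_sup (f := fun s => if h : InAlg s then (exists_rep h).choose else 1) hs
      _ ≤ n := le_max_right _ _
  choose! T hT using hrep
  have hμs : ∀ s ∈ π, μ s = ∑ p ∈ T s, amp t p.1 := by
    intro s hs
    conv_lhs => rw [hT s hs]
    exact mu_USet hμ hn1 _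
  have hTdisj : ∀ s ∈ π, ∀ u ∈ π, s ≠ u → Disjoint (T s) (T u) := by
    intro s hs u hu hsu
    rw [Finset.disjoint_left]
    intro p hps hpu
    obtain ⟨r, hr⟩ := Cyl_nonempty p
    rw [mem_Cyl_iff] at hr
    have h1 : r ∈ s := by rw [hT s hs]; exact (by simpa [USet, hr] using hps)
    have h2 : r ∈ u := by rw [hT u hu]; exact (by simpa [USet, hr] using hpu)
    exact Set.disjoint_left.mp (hπ.2.1 hs hu hsu) h1 h2
  refine ⟨n, hn1, ?_⟩
  calc ∑ s ∈ π, ‖(μ s)‖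
      ≤ ∑ s ∈ π, ∑ p ∈ T s, ‖(amp t p.1)‖ := by
        refine Finset.sum_le_sum fun s hs => ?_
        rw [hμs s hs]
        exact norm_sum_le _ _
    _ = ∑ p ∈ π.biUnion T, ‖(amp t p.1)‖ := by
        rw [Finset.sum_biUnion]
        intro s hs u hu hsu
        exact hTdisj s hs u hu hsu
    _ ≤ Anorm t n := by
        apply Finset.sum_le_sum_of_subset_of_nonneg (Finset.subset_univ _)
        intro p _ _
        exact norm_nonneg _
end S13


namespace S13
set_option maxHeartbeats 1600000
section Ext
variable {n : ℕ}

def extRel (c : Fin n → Fin n → Prop) (I : Finset (Fin n)) : Fin (n+1) → Fin (n+1) → Prop :=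
  fun i j => (∃ (hi : i.1 < n) (hj : j.1 < n), c ⟨i.1, hi⟩ ⟨j.1, hj⟩) ∨
    (j.1 = n ∧ ∃ hi : i.1 < n, (⟨i.1, hi⟩ : Fin n) ∈ I)

lemma extRel_cc {c : Fin n → Fin n → Prop} {I : Finset (Fin n)} (a b : Fin n) :
    extRel c I a.castSucc b.castSucc ↔ c a b := by
  unfold extRel
  constructor
  · rintro (⟨hi, hj, h⟩ | ⟨hj, -⟩)
    · exact h
    · exfalso
      have hb := b.isLt
      simp only [Fin.coe_castSucc] at hj
      omega
  · intro h
    exact Or.inl ⟨a.isLt, b.isLt, h⟩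

lemma extRel_cl {c : Fin n → Fin n → Prop} {I : Finset (Fin n)} (a : Fin n) :
    extRel c I a.castSucc (Fin.last n) ↔ a ∈ I := by
  unfold extRel
  constructor
  · rintro (⟨-, hj, -⟩ | ⟨-, hi, h⟩)
    · exfalso
      simp only [Fin.val_last] at hj
      omega
    · exact h
  · intro h
    exact Or.inr ⟨rfl, a.isLt, h⟩

lemma extRel_last {c : Fin n → Fin n → Prop} {I : Finset (Fin n)} (j : Fin (n+1)) :
    ¬ extRel c I (Fin.last n) j := by
  rintro (⟨hi, -, -⟩ | ⟨-, hi, -⟩) <;> simp [Fin.last] at hi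

lemma extIsNode (c : Node n) (I : Finset (Fin n)) (hI : isIdeal c.1 I) :
    IsNode (extRel c.1 I) := by
  refine ⟨?_, ?_, ?_⟩
  · rintro i (⟨hi, hj, h⟩ | ⟨hj, hi, -⟩)
    · exact c.2.1 _ h
    · omega
  · rintro i j l (⟨hi, hj, h1⟩ | ⟨hj, hi1, hmem⟩) (⟨hj', hl, h2⟩ | ⟨hl, hj'', hmem2⟩)
    · exact Or.inl ⟨hi, hl, c.2.2.1 _ _ _ h1 h2⟩
    · exact Or.inr ⟨hl, hi, hI _ hmem2 _ h1⟩
    · omega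
    · omega
  · rintro i j (⟨hi, hj, h⟩ | ⟨hj, hi, -⟩)
    · exact c.2.2.2 _ _ h
    · omega

def extN (c : Node n) (I : Finset (Fin n)) : Node (n+1) :=
  if h : isIdeal c.1 I then ⟨extRel c.1 I, extIsNode c I h⟩
  else ⟨fun _ _ => False, ⟨fun _ h => h, fun _ _ _ h _ => h.elim, fun _ _ h => h.elim⟩⟩

def resS (q : Node (n+1)) : Node n := resN (Nat.le_succ n) q

lemma resS_apply (q : Node (n+1)) (i j : Fin n) :
    (resS q).1 i j = q.1 i.castSucc j.castSucc := rfl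

def idl (q : Node (n+1)) : Finset (Fin n) :=
  Finset.univ.filter (fun i => q.1 i.castSucc (Fin.last n))

lemma idl_isIdeal (q : Node (n+1)) : isIdeal (resS q).1 (idl q) := by
  intro j hj i hij
  simp only [idl, Finset.mem_filter, Finset.mem_univ, true_and] at hj ⊢
  exact q.2.2.1 _ _ _ hij hj

lemma resS_ext (c : Node n) (I : Finset (Fin n)) (hI : isIdeal c.1 I) :
    resS (extN c I) = c := by
  rw [extN, dif_pos hI]
  exact Subtype.ext (funext fun i => funext fun j => propext (extRel_cc i j))

lemma idl_ext (c : Node n) (I : Finset (Fin n)) (hI : isIdeal c.1 I) :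
    idl (extN c I) = I := by
  rw [extN, dif_pos hI]
  ext a
  simp only [idl, Finset.mem_filter, Finset.mem_univ, true_and]
  exact extRel_cl a

lemma ext_resS (q : Node (n+1)) : extN (resS q) (idl q) = q := by
  have h1 : (extN (resS q) (idl q)).1 = extRel (resS q).1 (idl q) := by
    rw [extN, dif_pos (idl_isIdeal q)]
  apply Subtype.ext
  rw [h1]
  funext i j
  apply propext
  rcases Fin.eq_castSucc_or_eq_last i with ⟨a, rfl⟩ | rfl
  · rcases Fin.eq_castSucc_or_eq_last j with ⟨b, rfl⟩ | rfl
    · rw [extRel_cc]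
      exact Iff.rfl
    · rw [extRel_cl]
      simp only [idl, Finset.mem_filter, Finset.mem_univ, true_and]
  · constructor
    · intro h
      exact absurd h (extRel_last _)
    · intro h
      have := q.2.2.2 _ _ h
      simp only [Fin.val_last] at this
      omega

lemma maxIn_image (q : Node (n+1)) (S : Finset (Fin n)) :
    maxIn q.1 (S.image Fin.castSucc) = (maxIn (resS q).1 S).image Fin.castSucc := by
  ext i
  rcases Fin.eq_castSucc_or_eq_last i with ⟨a, rfl⟩ | rfl
  · simp only [maxIn, Finset.mem_filter, Finset.mem_image]
    constructor
    · rintro ⟨⟨b, hb, hba⟩, hmax⟩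
      have hab : b = a := Fin.castSucc_injective n hba
      subst hab
      refine ⟨b, ⟨⟨hb, fun j hj hcj => ?_⟩, rfl⟩⟩
      exact hmax j.castSucc ⟨j, hj, rfl⟩ hcj
    · rintro ⟨b, ⟨⟨hbS, hbmax⟩, hba⟩⟩
      have hab : b = a := Fin.castSucc_injective n hba
      subst hab
      refine ⟨⟨b, hbS, rfl⟩, ?_⟩
      rintro j ⟨j', hj', rfl⟩ hcj
      exact hbmax j' hj' hcj
  · constructor
    · intro h
      have := (Finset.filter_subset _ _) h
      obtain ⟨b, -, hb⟩ := Finset.mem_image.mp this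
      exact absurd hb (ne_of_lt (Fin.castSucc_lt_last b))
    · intro h
      obtain ⟨b, -, hb⟩ := Finset.mem_image.mp h
      exact absurd hb (ne_of_lt (Fin.castSucc_lt_last b))

lemma pastOf_castSucc (q : Node (n+1)) (a : Fin n) :
    pastOf q.1 a.castSucc = (pastOf (resS q).1 a).image Fin.castSucc := by
  ext i
  simp only [pastOf, Finset.mem_filter, Finset.mem_univ, true_and, Finset.mem_image]
  rcases Fin.eq_castSucc_or_eq_last i with ⟨b, rfl⟩ | rfl
  · constructor
    · intro h
      exact ⟨b, h, rfl⟩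
    · rintro ⟨b', hb', hb⟩
      have : b' = b := Fin.castSucc_injective n hb
      subst this
      exact hb'
  · constructor
    · intro h
      have := q.2.2.2 _ _ h
      simp only [Fin.val_last, Fin.coe_castSucc] at this
      omega
    · rintro ⟨b', -, hb⟩
      exact absurd hb (ne_of_lt (Fin.castSucc_lt_last b'))

lemma pastOf_last (q : Node (n+1)) :
    pastOf q.1 (Fin.last n) = (idl q).image Fin.castSucc := by
  ext i
  simp only [pastOf, idl, Finset.mem_filter, Finset.mem_univ, true_and, Finset.mem_image]
  rcases Fin.eq_castSucc_or_eq_last i with ⟨b, rfl⟩ | rfl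
  · constructor
    · intro h
      exact ⟨b, h, rfl⟩
    · rintro ⟨b', hb', hb⟩
      have : b' = b := Fin.castSucc_injective n hb
      subst this
      exact hb'
  · constructor
    · intro h
      have := q.2.1 _ h
      exact this.elim
    · rintro ⟨b', -, hb⟩
      exact absurd hb (ne_of_lt (Fin.castSucc_lt_last b'))

lemma card_image_castSucc (S : Finset (Fin n)) :
    (S.image Fin.castSucc).card = S.card :=
  Finset.card_image_of_injective _ (Fin.castSucc_injective n)

lemma amp_succ (t : ℕ → ℂ) (hn : 1 ≤ n) (q : Node (n+1)) :
    amp t q.1 = amp t (resS q).1 *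
      (lam t (idl q).card (maxIn (resS q).1 (idl q)).card / lam t n 0) := by
  unfold amp
  rw [Finset.prod_filter, Finset.prod_filter, Fin.prod_univ_castSucc]
  congr 1
  · refine Finset.prod_congr rfl fun a _ => ?_
    rw [pastOf_castSucc, maxIn_image, card_image_castSucc, card_image_castSucc]
    simp only [Fin.coe_castSucc]
  · rw [pastOf_last, maxIn_image, card_image_castSucc, card_image_castSucc,
      Fin.val_last, if_pos hn]

end Ext
end S13


namespace S13
set_option maxHeartbeats 1600000
variable {n : ℕ}

lemma aboveMax (c : Node n) (I : Finset (Fin n)) :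
    ∀ x ∈ I, ∃ y ∈ maxIn c.1 I, x = y ∨ c.1 x y := by
  suffices h : ∀ (fuel : ℕ) (x : Fin n), n - x.1 ≤ fuel → x ∈ I →
      ∃ y ∈ maxIn c.1 I, x = y ∨ c.1 x y by
    intro x hx
    exact h n x (by omega) hx
  intro fuel
  induction fuel with
  | zero =>
      intro x h hx
      have := x.isLt
      omega
  | succ f ih =>
      intro x hfx hx
      by_cases hmax : ∀ j ∈ I, ¬ c.1 x j
      · exact ⟨x, Finset.mem_filter.mpr ⟨hx, hmax⟩, Or.inl rfl⟩
      · push_neg at hmax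
        obtain ⟨j, hjI, hcj⟩ := hmax
        have hlt : x.1 < j.1 := c.2.2.2 _ _ hcj
        obtain ⟨y, hy, hyo⟩ := ih j (by have := j.isLt; omega) hjI
        refine ⟨y, hy, Or.inr ?_⟩
        rcases hyo with rfl | hcy
        · exact hcj
        · exact c.2.2.1 _ _ _ hcj hcy

/-- recovery of an ideal from maximal elements together with extra elements -/
lemma ideal_recovery (c : Node n) (I : Finset (Fin n)) (hI : isIdeal c.1 I)
    (S : Finset (Fin n)) (hS : S ⊆ I \ maxIn c.1 I) :
    I = Finset.univ.filter (fun x => ∃ y ∈ maxIn c.1 I ∪ S, x = y ∨ c.1 x y) := by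
  ext x
  simp only [Finset.mem_filter, Finset.mem_univ, true_and, Finset.mem_union]
  constructor
  · intro hx
    obtain ⟨y, hy, hyo⟩ := aboveMax c I x hx
    exact ⟨y, Or.inl hy, hyo⟩
  · rintro ⟨y, hy, hyo⟩
    have hyI : y ∈ I := by
      rcases hy with hy | hy
      · exact (Finset.filter_subset _ _) hy
      · exact (Finset.mem_sdiff.mp (hS hy)).1
    rcases hyo with rfl | hc
    · exact hyI
    · exact hI y hyI x hc

lemma core_count (c : Node n) (k : ℕ) :
    ∑ I ∈ (Finset.univ.filter (fun I : Finset (Fin n) => isIdeal c.1 I)).filter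
        (fun I => (maxIn c.1 I).card ≤ k ∧ k ≤ I.card),
      ((I.card - (maxIn c.1 I).card).choose (k - (maxIn c.1 I).card)) ≤ n.choose k := by
  classical
  set D := (Finset.univ.filter (fun I : Finset (Fin n) => isIdeal c.1 I)).filter
      (fun I => (maxIn c.1 I).card ≤ k ∧ k ≤ I.card) with hD
  set G : Finset (Fin n) → Finset (Finset (Fin n)) := fun I =>
    ((I \ maxIn c.1 I).powersetCard (k - (maxIn c.1 I).card)).image
      (fun S => maxIn c.1 I ∪ S) with hG
  have hdisjMS : ∀ (I : Finset (Fin n)), ∀ S ∈ (I \ maxIn c.1 I).powersetCard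
      (k - (maxIn c.1 I).card), Disjoint (maxIn c.1 I) S := by
    intro I S hS
    rw [Finset.disjoint_right]
    intro x hxS
    have := (Finset.mem_powersetCard.mp hS).1 hxS
    exact (Finset.mem_sdiff.mp this).2
  have hcardG : ∀ I ∈ D, (G I).card = (I.card - (maxIn c.1 I).card).choose
      (k - (maxIn c.1 I).card) := by
    intro I _
    rw [hG]
    rw [Finset.card_image_of_injOn]
    · rw [Finset.card_powersetCard,
        Finset.card_sdiff_of_subset (show maxIn c.1 I ⊆ I from Finset.filter_subset _ _)]
    · intro S1 h1 S2 h2 he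
      have he' : maxIn c.1 I ∪ S1 = maxIn c.1 I ∪ S2 := he
      have e1 := Finset.union_sdiff_cancel_left (hdisjMS I S1 h1)
      have e2 := Finset.union_sdiff_cancel_left (hdisjMS I S2 h2)
      rw [← e1, ← e2, he']
  have hGsub : ∀ I ∈ D, G I ⊆ Finset.univ.powersetCard k := by
    intro I hID
    rw [hD, Finset.mem_filter] at hID
    obtain ⟨-, hm, hk⟩ := hID
    intro K hK
    rw [hG] at hK
    obtain ⟨S, hS, rfl⟩ := Finset.mem_image.mp hK
    rw [Finset.mem_powersetCard]
    refine ⟨Finset.subset_univ _, ?_⟩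
    rw [Finset.card_union_of_disjoint (hdisjMS I S hS)]
    have := (Finset.mem_powersetCard.mp hS).2
    omega
  have hrec : ∀ I ∈ D, ∀ K ∈ G I,
      I = Finset.univ.filter (fun x => ∃ y ∈ K, x = y ∨ c.1 x y) := by
    intro I hID K hK
    rw [hD, Finset.mem_filter, Finset.mem_filter] at hID
    have hI : isIdeal c.1 I := hID.1.2
    rw [hG] at hK
    obtain ⟨S, hS, rfl⟩ := Finset.mem_image.mp hK
    exact ideal_recovery c I hI S (Finset.mem_powersetCard.mp hS).1
  have hdisjG : ∀ I1 ∈ D, ∀ I2 ∈ D, I1 ≠ I2 → Disjoint (G I1) (G I2) := by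
    intro I1 h1 I2 h2 hne
    rw [Finset.disjoint_left]
    intro K hK1 hK2
    exact hne ((hrec I1 h1 K hK1).trans (hrec I2 h2 K hK2).symm)
  calc ∑ I ∈ D, ((I.card - (maxIn c.1 I).card).choose (k - (maxIn c.1 I).card))
      = ∑ I ∈ D, (G I).card := (Finset.sum_congr rfl hcardG).symm
    _ = (D.biUnion G).card := (Finset.card_biUnion hdisjG).symm
    _ ≤ (Finset.univ.powersetCard k : Finset (Finset (Fin n))).card := by
        apply Finset.card_le_card
        intro K hK
        obtain ⟨I, hID, hKI⟩ := Finset.mem_biUnion.mp hK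
        exact hGsub I hID hKI
    _ = n.choose k := by
        rw [Finset.card_powersetCard, Finset.card_univ, Fintype.card_fin]

lemma abs_lam_le (t : ℕ → ℂ) (a b : ℕ) :
    ‖(lam t a b)‖ ≤ ∑ j ∈ Finset.Icc b a, ((a-b).choose (j-b) : ℝ) * ‖(t j)‖ := by
  refine (norm_sum_le _ _).trans (le_of_eq ?_)
  exact Finset.sum_congr rfl fun j _ => by rw [norm_mul, Complex.norm_natCast]

lemma Qval_le (t : ℕ → ℂ) (c : Node n) :
    Qval t c.1 ≤ ∑ j ∈ Finset.range (n+1), (n.choose j : ℝ) * ‖(t j)‖ := by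
  classical
  have hIcard : ∀ I : Finset (Fin n), I.card ≤ n := by
    intro I
    have := Finset.card_le_univ I
    rwa [Fintype.card_fin] at this
  calc Qval t c.1
      ≤ ∑ I ∈ Finset.univ.filter (fun I : Finset (Fin n) => isIdeal c.1 I),
          ∑ j ∈ Finset.Icc (maxIn c.1 I).card I.card,
            ((I.card - (maxIn c.1 I).card).choose (j - (maxIn c.1 I).card) : ℝ)
              * ‖(t j)‖ := by
        unfold Qval
        exact Finset.sum_le_sum fun I _ => abs_lam_le t I.card (maxIn c.1 I).card
    _ = ∑ I ∈ Finset.univ.filter (fun I : Finset (Fin n) => isIdeal c.1 I),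
          ∑ j ∈ Finset.range (n+1),
            (if j ∈ Finset.Icc (maxIn c.1 I).card I.card then
              ((I.card - (maxIn c.1 I).card).choose (j - (maxIn c.1 I).card) : ℝ)
                * ‖(t j)‖ else 0) := by
        refine Finset.sum_congr rfl fun I _ => ?_
        rw [Finset.sum_ite_mem, Finset.inter_eq_right.mpr]
        intro j hj
        rw [Finset.mem_Icc] at hj
        rw [Finset.mem_range]
        have := hIcard I
        omega
    _ ≤ ∑ j ∈ Finset.range (n+1), (n.choose j : ℝ) * ‖(t j)‖ := by
        rw [Finset.sum_comm]
        refine Finset.sum_le_sum fun j _ => ?_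
        have hcond : ∀ I : Finset (Fin n),
            (j ∈ Finset.Icc (maxIn c.1 I).card I.card)
              = ((maxIn c.1 I).card ≤ j ∧ j ≤ I.card) := by
          intro I
          rw [eq_iff_iff, Finset.mem_Icc]
        simp only [hcond]
        rw [← Finset.sum_filter, ← Finset.sum_mul]
        apply mul_le_mul_of_nonneg_right _ (norm_nonneg _)
        exact_mod_cast core_count c j

lemma Anorm_succ_le (t : ℕ → ℂ) (hn : 1 ≤ n) (hlam : lam t n 0 ≠ 0) :
    Anorm t (n+1) ≤ (zetaA t n + 1) * Anorm t n := by
  classical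
  have habs : 0 < ‖(lam t n 0)‖ := norm_pos_iff.mpr hlam
  have inner : ∀ c : Node n,
      ∑ q ∈ Finset.univ.filter (fun q : Node (n+1) => resS q = c), ‖(amp t q.1)‖
        = ∑ I ∈ Finset.univ.filter (fun I : Finset (Fin n) => isIdeal c.1 I),
            ‖(amp t c.1)‖ *
              (‖(lam t I.card (maxIn c.1 I).card)‖ / ‖(lam t n 0)‖) := by
    intro c
    refine Finset.sum_nbij' (i := fun q => idl q) (j := fun I => extN c I) ?_ ?_ ?_ ?_ ?_
    · intro q hq
      rw [Finset.mem_filter] at hq ⊢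
      refine ⟨Finset.mem_univ _, ?_⟩
      rw [← hq.2]
      exact idl_isIdeal q
    · intro I hI
      rw [Finset.mem_filter] at hI ⊢
      exact ⟨Finset.mem_univ _, resS_ext c I hI.2⟩
    · intro q hq
      rw [Finset.mem_filter] at hq
      rw [← hq.2]
      exact ext_resS q
    · intro I hI
      rw [Finset.mem_filter] at hI
      exact idl_ext c I hI.2
    · intro q hq
      rw [Finset.mem_filter] at hq
      rw [amp_succ t hn q, hq.2, norm_mul, norm_div]
  have key : Anorm t (n+1)
      = ∑ c : Node n, ‖(amp t c.1)‖ * (Qval t c.1 / ‖(lam t n 0)‖) := by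
    unfold Anorm
    rw [← Finset.sum_fiberwise_of_maps_to (g := resS) (fun q _ => Finset.mem_univ _)
      (fun q : Node (n+1) => ‖(amp t q.1)‖)]
    refine Finset.sum_congr rfl fun c _ => ?_
    rw [inner c, ← Finset.mul_sum, ← Finset.sum_div]
    rfl
  rw [key]
  have hz1 : zetaA t n + 1
      = (∑ j ∈ Finset.range (n+1), (n.choose j : ℝ) * ‖(t j)‖)
        / ‖(lam t n 0)‖ := by
    unfold zetaA
    ring
  calc ∑ c : Node n, ‖(amp t c.1)‖ * (Qval t c.1 / ‖(lam t n 0)‖)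
      ≤ ∑ c : Node n, ‖(amp t c.1)‖ * (zetaA t n + 1) := by
        refine Finset.sum_le_sum fun c _ => ?_
        apply mul_le_mul_of_nonneg_left _ (norm_nonneg _)
        rw [hz1]
        exact (div_le_div_iff_of_pos_right habs).mpr (Qval_le t c)
    _ = (zetaA t n + 1) * Anorm t n := by
        rw [← Finset.sum_mul]
        unfold Anorm
        ring

lemma Anorm_one (t : ℕ → ℂ) : Anorm t 1 = 1 := by
  classical
  have hamp : ∀ p : Node 1, amp t p.1 = 1 := by
    intro p
    unfold amp
    rw [Finset.filter_false_of_mem, Finset.prod_empty]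
    intro m _
    have := m.isLt
    omega
  have hcard : Fintype.card (Node 1) = 1 := by
    rw [Fintype.card_eq_one_iff]
    refine ⟨⟨fun _ _ => False, ⟨fun _ h => h, fun _ _ _ h _ => h.elim, fun _ _ h => h.elim⟩⟩, ?_⟩
    intro q
    refine Subtype.ext (funext fun i => funext fun j => propext ⟨fun h => ?_, False.elim⟩)
    have := q.2.2.2 i j h
    have hi := i.isLt
    have hj := j.isLt
    omega
  unfold Anorm
  calc ∑ p : Node 1, ‖(amp t p.1)‖ = ∑ _p : Node 1, (1:ℝ) :=
        Finset.sum_congr rfl fun p _ => by rw [hamp p, norm_one]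
    _ = 1 := by rw [Finset.sum_const, Finset.card_univ, hcard, one_smul]

end S13


set_option maxHeartbeats 1600000 in
/-- finitely many couplings t_{k_1} = z_1, …, t_{k_m} = z_m with
0 < k_1 < ⋯ < k_m and k_m − k_{m−1} ≥ 2: ζ_n^a has the stated closed form, Σ_{n≥1} ζ_n^a
converges, and the associated ℂSG measure is of bounded variation. -/
theorem statement_13 (m : ℕ) (hm : 2 ≤ m) (k : Fin m → ℕ)
    (hkpos : 0 < k ⟨0, by omega⟩) (hkmono : StrictMono k)
    (hgap : k ⟨m - 2, by omega⟩ + 2 ≤ k ⟨m - 1, by omega⟩)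
    (z : Fin m → ℂ) (hz : ∀ i, z i ≠ 0)
    (t : ℕ → ℂ) (ht0 : t 0 = 1) (htk : ∀ i : Fin m, t (k i) = z i)
    (ht : ∀ j : ℕ, 1 ≤ j → (∀ i : Fin m, j ≠ k i) → t j = 0)
    (hne : ∀ n : ℕ, 1 + ∑ i : Fin m, (n.choose (k i) : ℂ) * z i ≠ 0) :
    (∀ n : ℕ, zetaA t n =
        (1 + ∑ i : Fin m, (n.choose (k i) : ℝ) * ‖(z i)‖) /
          ‖(1 + ∑ i : Fin m, (n.choose (k i) : ℂ) * z i)‖ - 1) ∧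
    (∃ L : ℝ, Filter.Tendsto (fun N => ∑ n ∈ Finset.Ico 1 N, zetaA t n)
        Filter.atTop (nhds L)) ∧
    (∀ μ : Set Omega → ℂ, IsCSG t μ → BoundedVariation μ) := by
  have hk1 : ∀ i : Fin m, 1 ≤ k i := by
    intro i
    have h0 : (⟨0, by omega⟩ : Fin m) ≤ i := by simp [Fin.le_def]
    have := hkmono.monotone h0
    omega
  have hkinj : Function.Injective k := hkmono.injective
  have hlam : ∀ n : ℕ, lam t n 0 = 1 + ∑ i : Fin m, (n.choose (k i) : ℂ) * z i := by
    intro n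
    have h0 : lam t n 0 = ∑ j ∈ Finset.range (n+1), (n.choose j : ℂ) * t j := by
      unfold lam
      rw [show Finset.Icc 0 n = Finset.range (n+1) from by ext x; simp [Nat.lt_succ_iff]]
      simp
    rw [h0]
    exact s13_key_sum k hk1 hkinj t z ht0 htk ht n
  have hnum : ∀ n : ℕ, (∑ j ∈ Finset.range (n+1), (n.choose j : ℝ) * ‖(t j)‖)
      = 1 + ∑ i : Fin m, (n.choose (k i) : ℝ) * ‖(z i)‖ := by
    intro n
    exact s13_key_sum k hk1 hkinj (fun j => ‖(t j)‖) (fun i => ‖(z i)‖)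
      (by show ‖(t 0)‖ = 1; rw [ht0, norm_one])
      (fun i => by show ‖(t (k i))‖ = ‖(z i)‖; rw [htk])
      (fun j h1 h2 => by show ‖(t j)‖ = 0; rw [ht j h1 h2, norm_zero]) n
  have part1 : ∀ n : ℕ, zetaA t n =
      (1 + ∑ i : Fin m, (n.choose (k i) : ℝ) * ‖(z i)‖) /
        ‖(1 + ∑ i : Fin m, (n.choose (k i) : ℂ) * z i)‖ - 1 := by
    intro n
    unfold zetaA
    rw [hnum n, hlam n]
  have hG_pos : ∀ n : ℕ, 0 < ‖(1 + ∑ i : Fin m, (n.choose (k i) : ℂ) * z i)‖ :=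
    fun n => norm_pos_iff.mpr (hne n)
  have hzeta_nonneg : ∀ n : ℕ, 0 ≤ zetaA t n := by
    intro n
    rw [part1 n, sub_nonneg, one_le_div (hG_pos n)]
    calc ‖(1 + ∑ i : Fin m, (n.choose (k i) : ℂ) * z i)‖
        ≤ 1 + ∑ i : Fin m, ‖((n.choose (k i) : ℂ) * z i)‖ := by
          refine (norm_add_le _ _).trans ?_
          rw [norm_one]
          exact add_le_add (le_refl 1) (norm_sum_le _ _)
      _ = 1 + ∑ i : Fin m, (n.choose (k i) : ℝ) * ‖(z i)‖ := by
          congr 1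
          exact Finset.sum_congr rfl fun i _ => by rw [norm_mul, Complex.norm_natCast]
  obtain ⟨N₀, C₀, hboundNC⟩ := s13_ratio_bound hm k hkmono hgap z hz hne
  have hsummable : Summable (fun n => zetaA t n) := by
    rw [← summable_nat_add_iff (N₀ + 1)]
    have base : Summable (fun j : ℕ => 1 / ((j:ℝ))^2) :=
      Real.summable_one_div_nat_pow.mpr one_lt_two
    have shifted : Summable (fun j : ℕ => 1 / (((j + (N₀+1)) : ℕ):ℝ)^2) :=
      (summable_nat_add_iff (N₀+1)).mpr base
    have hbd : Summable (fun j : ℕ => C₀ / (((j + (N₀+1)) : ℕ):ℝ)^2) := by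
      refine (shifted.mul_left C₀).congr fun j => ?_
      rw [mul_one_div]
    refine Summable.of_nonneg_of_le (fun j => hzeta_nonneg _) (fun j => ?_) hbd
    rw [part1 _]
    exact hboundNC _ (by omega)
  refine ⟨part1, ⟨(∑' n, zetaA t n) - zetaA t 0, ?_⟩, ?_⟩
  · have h1 := hsummable.hasSum.tendsto_sum_nat
    have h2 := h1.sub_const (zetaA t 0)
    refine Filter.Tendsto.congr' ?_ h2
    filter_upwards [Filter.eventually_ge_atTop 1] with N hN
    rw [Finset.sum_Ico_eq_sub _ hN, Finset.sum_range_one]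
  · intro μ hμ
    have hlam_ne : ∀ n : ℕ, lam t n 0 ≠ 0 := fun n => by rw [hlam n]; exact hne n
    have hrec : ∀ n : ℕ, 1 ≤ n → S13.Anorm t (n+1) ≤ (zetaA t n + 1) * S13.Anorm t n :=
      fun n hn => S13.Anorm_succ_le t hn (hlam_ne n)
    have hprod : ∀ N : ℕ, 1 ≤ N → S13.Anorm t N ≤ ∏ j ∈ Finset.Ico 1 N, (zetaA t j + 1) := by
      intro N hN
      induction N, hN using Nat.le_induction with
      | base => rw [S13.Anorm_one]; simp
      | succ N hN ih =>
          calc S13.Anorm t (N+1) ≤ (zetaA t N + 1) * S13.Anorm t N := hrec N hN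
            _ ≤ (zetaA t N + 1) * ∏ j ∈ Finset.Ico 1 N, (zetaA t j + 1) := by
                apply mul_le_mul_of_nonneg_left ih
                have := hzeta_nonneg N
                linarith
            _ = ∏ j ∈ Finset.Ico 1 (N+1), (zetaA t j + 1) := by
                rw [Finset.prod_Ico_succ_top hN]
                ring
    have hexp : ∀ N : ℕ, 1 ≤ N → S13.Anorm t N ≤ Real.exp (∑' n, zetaA t n) := by
      intro N hN
      refine (hprod N hN).trans ?_
      calc ∏ j ∈ Finset.Ico 1 N, (zetaA t j + 1)
          ≤ ∏ j ∈ Finset.Ico 1 N, Real.exp (zetaA t j) := by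
            apply Finset.prod_le_prod
            · intro j _
              have := hzeta_nonneg j
              linarith
            · intro j _
              exact Real.add_one_le_exp (zetaA t j)
        _ = Real.exp (∑ j ∈ Finset.Ico 1 N, zetaA t j) := (Real.exp_sum _ _).symm
        _ ≤ Real.exp (∑' n, zetaA t n) := by
            apply Real.exp_le_exp.mpr
            exact Summable.sum_le_tsum _ (fun i _ => hzeta_nonneg i) hsummable
    refine ⟨Real.exp (∑' n, zetaA t n), ?_⟩
    intro π hπ
    obtain ⟨n, hn, hle⟩ := S13.partition_bound hμ π hπ
    exact hle.trans (hexp n hn)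

end
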